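/- Let n ≥ 1 and let k be an integer with 0 ≤ k ≤ n, f = k/n, and 0 < ε₁ ≤ ε₂; set ε̄ = f ε₁ + (1−f) ε₂. Then the minimax risk satisfies L(ε₁,ε₂,n,f) ≥ (1/16) · min{ 1/(16 n² ε̄²), 1/4 }. -/

import Mathlib

open MeasureTheory ProbabilityTheory Real
open scoped ENNReal

noncomputable section

abbrev UnitI : Set ℝ := Set.Icc (-(1:ℝ)/2) (1/2)

abbrev Dataset (n : ℕ) : Type := Fin n → UnitI

def INeighbor {n : ℕ} (i : Fin n) (x x' : Dataset n) : Prop :=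
  ∀ j : Fin n, j ≠ i → x j = x' j

def IsDP {n : ℕ} {Y : Type} [MeasurableSpace Y]
    (ε : Fin n → ℝ) (M : Kernel (Dataset n) Y) : Prop :=
  ∀ i : Fin n, ∀ x x' : Dataset n, INeighbor i x x' →
    ∀ S : Set Y, MeasurableSet S →
      M x S ≤ ENNReal.ofReal (Real.exp (ε i)) * M x' S

def meanOf (P : Measure UnitI) : ℝ := ∫ z, (z : ℝ) ∂P

def errOf {n : ℕ} (M : Kernel (Dataset n) UnitI) (P : Measure UnitI) : ℝ :=
  ∫ x, (∫ y, ((y : ℝ) - meanOf P)^2 ∂(M x)) ∂(Measure.pi fun _ : Fin n => P)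

def wcError {n : ℕ} (M : Kernel (Dataset n) UnitI) : ℝ :=
  ⨆ P : {P : Measure UnitI // IsProbabilityMeasure P}, errOf M P.1

def minimaxRisk (n : ℕ) (ε : Fin n → ℝ) : ℝ :=
  ⨅ M : {M : Kernel (Dataset n) UnitI // IsMarkovKernel M ∧ IsDP ε M}, wcError M.1

def twoGroup (n k : ℕ) (ε₁ ε₂ : ℝ) : Fin n → ℝ :=
  fun i => if (i : ℕ) < k then ε₁ else ε₂

-- auxiliary lemmas

namespace MLBaux

def z0 : UnitI := ⟨0, by constructor <;> norm_num⟩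

lemma dp_chain {n : ℕ} {Y : Type} [MeasurableSpace Y] {ε : Fin n → ℝ}
    {M : Kernel (Dataset n) Y} (hDP : IsDP ε M)
    (T : Finset (Fin n)) (x x' : Dataset n) (hxx : ∀ j, j ∉ T → x j = x' j)
    (S : Set Y) (hS : MeasurableSet S) :
    M x S ≤ ENNReal.ofReal (Real.exp (∑ i ∈ T, ε i)) * M x' S := by
  classical
  induction T using Finset.induction_on generalizing x x' with
  | empty =>
    have : x = x' := funext fun j => hxx j (Finset.notMem_empty j)
    simp [this, Real.exp_zero]
  | insert i T hi ih =>
    set x'' : Dataset n := Function.update x' i (x i) with hx''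
    have h1 : M x S ≤ ENNReal.ofReal (Real.exp (∑ j ∈ T, ε j)) * M x'' S := by
      refine ih x x'' fun j hj => ?_
      by_cases hji : j = i
      · subst hji; simp [hx'', Function.update_self]
      · rw [hx'', Function.update_of_ne hji]
        exact hxx j (by simp [Finset.mem_insert, hji, hj])
    have h2 : M x'' S ≤ ENNReal.ofReal (Real.exp (ε i)) * M x' S := by
      refine hDP i x'' x' (fun j hj => ?_) S hS
      rw [hx'', Function.update_of_ne hj]
    calc M x S ≤ ENNReal.ofReal (Real.exp (∑ j ∈ T, ε j)) * M x'' S := h1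
      _ ≤ ENNReal.ofReal (Real.exp (∑ j ∈ T, ε j)) *
            (ENNReal.ofReal (Real.exp (ε i)) * M x' S) := mul_le_mul_right h2 _
      _ = ENNReal.ofReal (Real.exp (∑ j ∈ insert i T, ε j)) * M x' S := by
          rw [← mul_assoc, ← ENNReal.ofReal_mul (Real.exp_nonneg _), ← Real.exp_add,
            Finset.sum_insert hi, add_comm (ε i)]

lemma pi_two_atom {n : ℕ} (w : Bool → ℝ≥0∞) (hw : w false + w true = 1)
    (g : Bool → UnitI) :
    (Measure.pi fun _ : Fin n =>
        (w false • Measure.dirac (g false) + w true • Measure.dirac (g true))) =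
      ∑ t : Fin n → Bool, (∏ i, w (t i)) • Measure.dirac (fun i => g (t i)) := by
  classical
  set P : Measure UnitI := w false • Measure.dirac (g false) + w true • Measure.dirac (g true)
    with hP
  have hPprob : IsProbabilityMeasure P := by
    constructor
    simp [hP, Measure.add_apply, Measure.smul_apply, smul_eq_mul, hw]
  refine Measure.pi_eq fun s hs => ?_
  have hA : MeasurableSet (Set.pi Set.univ s) := MeasurableSet.univ_pi hs
  rw [Measure.finset_sum_apply]
  calc ∑ t : Fin n → Bool,
        ((∏ i, w (t i)) • Measure.dirac (fun i => g (t i))) (Set.pi Set.univ s)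
      = ∑ t : Fin n → Bool, ∏ i, (w (t i) * Measure.dirac (g (t i)) (s i)) := by
        refine Finset.sum_congr rfl fun t _ => ?_
        rw [Measure.smul_apply, smul_eq_mul, Measure.dirac_apply' _ hA]
        have hind : (Set.pi Set.univ s).indicator (1 : Dataset n → ℝ≥0∞) (fun i => g (t i)) =
            ∏ i, (s i).indicator (1 : UnitI → ℝ≥0∞) (g (t i)) := by
          simp only [Set.indicator_apply, Set.mem_univ_pi, Pi.one_apply]
          by_cases h : ∀ i, g (t i) ∈ s i
          · rw [if_pos h]
            exact (Finset.prod_eq_one fun i _ => by rw [if_pos (h i)]).symm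
          · rw [if_neg h]
            push_neg at h
            obtain ⟨i, hi⟩ := h
            exact (Finset.prod_eq_zero (Finset.mem_univ i) (by rw [if_neg hi])).symm
        rw [hind, ← Finset.prod_mul_distrib]
        refine Finset.prod_congr rfl fun i _ => ?_
        rw [Measure.dirac_apply' _ (hs i)]
    _ = ∏ i, ∑ b : Bool, (w b * Measure.dirac (g b) (s i)) := by
        rw [Finset.prod_univ_sum]
        rw [Fintype.piFinset_univ]
    _ = ∏ i, P (s i) := by
        refine Finset.prod_congr rfl fun i _ => ?_
        rw [Fintype.sum_bool, hP, Measure.add_apply, Measure.smul_apply, Measure.smul_apply,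
          smul_eq_mul, smul_eq_mul, add_comm]

lemma integrable_smul_dirac {α : Type*} [MeasurableSpace α] [MeasurableSingletonClass α]
    (f : α → ℝ) (c : ℝ≥0∞) (hc : c ≠ ⊤) (a : α) :
    Integrable f (c • Measure.dirac a) := by
  refine Integrable.smul_measure ?_ hc
  refine (integrable_const (f a)).congr ?_
  rw [Filter.EventuallyEq, ae_dirac_eq]
  exact Filter.eventually_pure.2 rfl

lemma integral_pi_two_atom {n : ℕ} (w : Bool → ℝ≥0∞) (hw : w false + w true = 1)
    (g : Bool → UnitI) (F : Dataset n → ℝ) :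
    (∫ x, F x ∂(Measure.pi fun _ : Fin n =>
        (w false • Measure.dirac (g false) + w true • Measure.dirac (g true)))) =
      ∑ t : Fin n → Bool, (∏ i, w (t i)).toReal * F (fun i => g (t i)) := by
  have hwne : ∀ b, w b ≠ ⊤ := by
    intro b
    have hb : w b ≤ 1 := by
      cases b
      · exact le_trans le_self_add hw.le
      · exact le_trans le_add_self hw.le
    exact (lt_of_le_of_lt hb ENNReal.one_lt_top).ne
  rw [pi_two_atom w hw g]
  rw [integral_finset_sum_measure fun t _ =>
    integrable_smul_dirac F _ (ENNReal.prod_ne_top fun i _ => hwne (t i)) _]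
  refine Finset.sum_congr rfl fun t _ => ?_
  rw [integral_smul_measure, integral_dirac, smul_eq_mul]

lemma inner_integral_ge {ν : Measure UnitI} (hν : IsProbabilityMeasure ν) (μ0 c : ℝ)
    (hc : 0 ≤ c) (B : Set UnitI) (hB : MeasurableSet B)
    (hpt : ∀ y : UnitI, y ∈ B → c ≤ ((y : ℝ) - μ0)^2) :
    c * (ν B).toReal ≤ ∫ y, ((y : ℝ) - μ0)^2 ∂ν := by
  have hmeas : Measurable fun y : UnitI => ((y : ℝ) - μ0)^2 :=
    (measurable_subtype_coe.sub measurable_const).pow_const 2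
  have hint : Integrable (fun y : UnitI => ((y : ℝ) - μ0)^2) ν := by
    refine Integrable.mono' (integrable_const ((1/2 + |μ0|)^2)) hmeas.aestronglyMeasurable ?_
    filter_upwards with y
    have h1 := y.2.1
    have h2 := y.2.2
    rw [Real.norm_eq_abs, abs_of_nonneg (sq_nonneg _)]
    nlinarith [abs_nonneg μ0, le_abs_self μ0, neg_abs_le μ0]
  have hind : Integrable (B.indicator fun _ : UnitI => c) ν := (integrable_const c).indicator hB
  have hmono : ∫ y, B.indicator (fun _ => c) y ∂ν ≤ ∫ y, ((y : ℝ) - μ0)^2 ∂ν := by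
    refine integral_mono hind hint fun y => ?_
    by_cases hy : y ∈ B
    · rw [Set.indicator_of_mem hy]; exact hpt y hy
    · rw [Set.indicator_of_notMem hy]; exact sq_nonneg _
  calc c * (ν B).toReal = ∫ y, B.indicator (fun _ => c) y ∂ν := by
        rw [integral_indicator_const c hB, smul_eq_mul, mul_comm]; rfl
    _ ≤ _ := hmono

lemma errOf_le_one {n : ℕ} {M : Kernel (Dataset n) UnitI} (hM : IsMarkovKernel M)
    {P : Measure UnitI} (hP : IsProbabilityMeasure P) : errOf M P ≤ 1 := by
  have hμ : |meanOf P| ≤ 1/2 := by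
    have h := norm_integral_le_of_norm_le_const (μ := P) (C := 1/2)
      (f := fun z : UnitI => (z : ℝ)) (by
        filter_upwards with z
        rw [Real.norm_eq_abs, abs_le]
        exact ⟨by linarith [z.2.1], z.2.2⟩)
    rw [probReal_univ, mul_one, Real.norm_eq_abs] at h
    exact h
  have hinner : ∀ x : Dataset n, ‖∫ y, ((y : ℝ) - meanOf P)^2 ∂(M x)‖ ≤ 1 := by
    intro x
    haveI : IsProbabilityMeasure (M x) := hM.isProbabilityMeasure x
    have h := norm_integral_le_of_norm_le_const (μ := M x) (C := 1)
      (f := fun y : UnitI => ((y : ℝ) - meanOf P)^2) (by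
        filter_upwards with y
        have h1 := y.2.1
        have h2 := y.2.2
        rw [Real.norm_eq_abs, abs_of_nonneg (sq_nonneg _)]
        nlinarith [abs_le.1 hμ])
    rwa [probReal_univ, mul_one] at h
  haveI : IsProbabilityMeasure (Measure.pi fun _ : Fin n => P) := by infer_instance
  have h := norm_integral_le_of_norm_le_const (μ := Measure.pi fun _ : Fin n => P) (C := 1)
    (f := fun x : Dataset n => ∫ y, ((y : ℝ) - meanOf P)^2 ∂(M x)) (by
      filter_upwards with x
      exact hinner x)
  rw [probReal_univ, mul_one] at h
  exact le_trans (le_abs_self _) h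

lemma nonempty_DP {n : ℕ} (ε : Fin n → ℝ) (hε : ∀ i, 0 ≤ ε i) :
    Nonempty {M : Kernel (Dataset n) UnitI // IsMarkovKernel M ∧ IsDP ε M} := by
  refine ⟨⟨Kernel.const _ (Measure.dirac z0), inferInstance, ?_⟩⟩
  intro i x x' _ S _
  simp only [Kernel.const_apply]
  refine le_mul_of_one_le_left zero_le ?_
  rw [show (1 : ℝ≥0∞) = ENNReal.ofReal 1 by simp]
  exact ENNReal.ofReal_le_ofReal (Real.one_le_exp (hε i))

end MLBaux

namespace MLBaux

def zp : UnitI := ⟨1/2, by constructor <;> norm_num⟩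
def zm : UnitI := ⟨-(1:ℝ)/2, by constructor <;> norm_num⟩

def gv (v : Bool) : Bool → UnitI := fun b => if b then (if v then zp else zm) else z0

def wgt (δ : ℝ) : Bool → ℝ≥0∞ := fun b => if b then ENNReal.ofReal δ else ENNReal.ofReal (1-δ)

def Prior (δ : ℝ) (v : Bool) : Measure UnitI :=
  wgt δ false • Measure.dirac (gv v false) + wgt δ true • Measure.dirac (gv v true)

def xdat {n : ℕ} (v : Bool) (t : Fin n → Bool) : Dataset n := fun i => gv v (t i)

def pwt (δ : ℝ) {n : ℕ} (t : Fin n → Bool) : ℝ := (∏ i, wgt δ (t i)).toReal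

def Ev {n : ℕ} (εv : Fin n → ℝ) (t : Fin n → Bool) : ℝ :=
  ∑ i ∈ Finset.univ.filter (fun i => t i = true), εv i

lemma wgt_sum (δ : ℝ) (hδ0 : 0 ≤ δ) (hδ1 : δ ≤ 1) : wgt δ false + wgt δ true = 1 := by
  have h1 : wgt δ false = ENNReal.ofReal (1-δ) := rfl
  have h2 : wgt δ true = ENNReal.ofReal δ := rfl
  rw [h1, h2, ← ENNReal.ofReal_add (by linarith) hδ0, show (1-δ)+δ = 1 by ring,
    ENNReal.ofReal_one]

lemma mean_prior (δ : ℝ) (hδ0 : 0 ≤ δ) (hδ1 : δ ≤ 1) (v : Bool) :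
    meanOf (Prior δ v) = δ * ((gv v true : UnitI) : ℝ) := by
  have h1 : wgt δ false = ENNReal.ofReal (1-δ) := rfl
  have h2 : wgt δ true = ENNReal.ofReal δ := rfl
  unfold meanOf Prior
  rw [integral_add_measure
      (integrable_smul_dirac _ _ (by rw [h1]; exact ENNReal.ofReal_ne_top) _)
      (integrable_smul_dirac _ _ (by rw [h2]; exact ENNReal.ofReal_ne_top) _),
    integral_smul_measure, integral_smul_measure, integral_dirac, integral_dirac,
    h1, h2, ENNReal.toReal_ofReal (by linarith), ENNReal.toReal_ofReal hδ0]
  have h3 : ((gv v false : UnitI) : ℝ) = 0 := rfl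
  rw [smul_eq_mul, smul_eq_mul, h3, mul_zero, zero_add]

lemma prior_prob (δ : ℝ) (hδ0 : 0 ≤ δ) (hδ1 : δ ≤ 1) (v : Bool) :
    IsProbabilityMeasure (Prior δ v) := by
  constructor
  unfold Prior
  rw [Measure.add_apply, Measure.smul_apply, Measure.smul_apply, measure_univ, measure_univ,
    smul_eq_mul, smul_eq_mul, mul_one, mul_one, wgt_sum δ hδ0 hδ1]

lemma core_bound {n : ℕ} (εv : Fin n → ℝ) (hεv : ∀ i, 0 < εv i) (δ : ℝ)
    (hδ0 : 0 < δ) (hδ1 : δ ≤ 1) (hδs : δ * (∑ i, εv i) ≤ 1/2)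
    (M : Kernel (Dataset n) UnitI) (hMk : IsMarkovKernel M) (hDP : IsDP εv M) :
    δ^2/16 ≤ wcError M := by
  classical
  have hw := wgt_sum δ hδ0.le hδ1
  set S' : Set UnitI := Subtype.val ⁻¹' Set.Ici (0:ℝ) with hS'def
  have hS' : MeasurableSet S' := measurable_subtype_coe measurableSet_Ici
  -- key pointwise DP inequality
  have hkey : ∀ t : Fin n → Bool, Real.exp (-(Ev εv t)) ≤
      (M (xdat false t) S').toReal + (M (xdat true t) S'ᶜ).toReal := by
    intro t
    haveI := hMk.isProbabilityMeasure (xdat false t)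
    haveI := hMk.isProbabilityMeasure (xdat true t)
    set c : ℝ≥0∞ := ENNReal.ofReal (Real.exp (Ev εv t)) with hc
    have hE0 : 0 ≤ Ev εv t := Finset.sum_nonneg fun i _ => (hεv i).le
    have hc1 : (1:ℝ≥0∞) ≤ c := by
      rw [hc, show (1:ℝ≥0∞) = ENNReal.ofReal 1 by simp]
      exact ENNReal.ofReal_le_ofReal (Real.one_le_exp hE0)
    have hchain : M (xdat false t) S'ᶜ ≤ c * M (xdat true t) S'ᶜ := by
      rw [hc]
      refine dp_chain hDP _ (xdat false t) (xdat true t) (fun j hj => ?_) _ hS'.compl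
      have hjf : t j = false := by simpa [Finset.mem_filter] using hj
      show gv false (t j) = gv true (t j)
      rw [hjf]
      rfl
    have h1 : (1:ℝ≥0∞) ≤ c * (M (xdat false t) S' + M (xdat true t) S'ᶜ) := by
      have hu : M (xdat false t) S' + M (xdat false t) S'ᶜ = 1 := by
        rw [measure_add_measure_compl hS', measure_univ]
      calc (1:ℝ≥0∞) = M (xdat false t) S' + M (xdat false t) S'ᶜ := hu.symm
        _ ≤ M (xdat false t) S' + c * M (xdat true t) S'ᶜ := add_le_add_right hchain _
        _ ≤ c * M (xdat false t) S' + c * M (xdat true t) S'ᶜ :=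
            add_le_add_left (le_mul_of_one_le_left zero_le hc1) _
        _ = c * (M (xdat false t) S' + M (xdat true t) S'ᶜ) := (mul_add _ _ _).symm
    have hc0 : c ≠ 0 := (lt_of_lt_of_le zero_lt_one hc1).ne'
    have hctop : c ≠ ⊤ := by rw [hc]; exact ENNReal.ofReal_ne_top
    have hinv : ENNReal.ofReal (Real.exp (-(Ev εv t))) ≤
        M (xdat false t) S' + M (xdat true t) S'ᶜ := by
      have hinv' : c⁻¹ ≤ M (xdat false t) S' + M (xdat true t) S'ᶜ := by
        calc c⁻¹ = c⁻¹ * 1 := (mul_one _).symm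
          _ ≤ c⁻¹ * (c * (M (xdat false t) S' + M (xdat true t) S'ᶜ)) := mul_le_mul_right h1 _
          _ = (c⁻¹ * c) * (M (xdat false t) S' + M (xdat true t) S'ᶜ) := (mul_assoc _ _ _).symm
          _ = M (xdat false t) S' + M (xdat true t) S'ᶜ := by
              rw [ENNReal.inv_mul_cancel hc0 hctop, one_mul]
      rwa [Real.exp_neg, ENNReal.ofReal_inv_of_pos (Real.exp_pos _), ← hc]
    have hfin : M (xdat false t) S' + M (xdat true t) S'ᶜ ≠ ⊤ :=
      ENNReal.add_ne_top.2 ⟨measure_ne_top _ _, measure_ne_top _ _⟩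
    have h2 := ENNReal.toReal_mono hfin hinv
    rwa [ENNReal.toReal_ofReal (Real.exp_nonneg _),
      ENNReal.toReal_add (measure_ne_top _ _) (measure_ne_top _ _)] at h2
  -- nonnegativity of weights
  have hp0 : ∀ t : Fin n → Bool, 0 ≤ pwt δ (n := n) t := fun t => ENNReal.toReal_nonneg
  -- means
  have hm1 : meanOf (Prior δ true) = δ/2 := by
    rw [mean_prior δ hδ0.le hδ1 true, show ((gv true true : UnitI) : ℝ) = 1/2 from rfl]
    ring
  have hm0 : meanOf (Prior δ false) = -(δ/2) := by
    rw [mean_prior δ hδ0.le hδ1 false, show ((gv false true : UnitI) : ℝ) = -(1:ℝ)/2 from rfl]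
    ring
  -- errOf expansions
  have herr1 : errOf M (Prior δ true) = ∑ t : Fin n → Bool,
      pwt δ t * ∫ y, ((y:ℝ) - δ/2)^2 ∂ M (xdat true t) := by
    have h : errOf M (Prior δ true) = ∑ t : Fin n → Bool,
        pwt δ t * ∫ y, ((y:ℝ) - meanOf (Prior δ true))^2 ∂ M (xdat true t) :=
      integral_pi_two_atom (wgt δ) hw (gv true)
        (fun x => ∫ y, ((y:ℝ) - meanOf (Prior δ true))^2 ∂ M x)
    simpa only [hm1] using h
  have herr0 : errOf M (Prior δ false) = ∑ t : Fin n → Bool,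
      pwt δ t * ∫ y, ((y:ℝ) - -(δ/2))^2 ∂ M (xdat false t) := by
    have h : errOf M (Prior δ false) = ∑ t : Fin n → Bool,
        pwt δ t * ∫ y, ((y:ℝ) - meanOf (Prior δ false))^2 ∂ M (xdat false t) :=
      integral_pi_two_atom (wgt δ) hw (gv false)
        (fun x => ∫ y, ((y:ℝ) - meanOf (Prior δ false))^2 ∂ M x)
    simpa only [hm0] using h
  -- inner lower bounds
  have hin1 : ∀ t : Fin n → Bool, (δ^2/4) * (M (xdat true t) S'ᶜ).toReal ≤
      ∫ y, ((y:ℝ) - δ/2)^2 ∂ M (xdat true t) := by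
    intro t
    haveI := hMk.isProbabilityMeasure (xdat true t)
    refine inner_integral_ge inferInstance (δ/2) (δ^2/4) (by positivity) S'ᶜ hS'.compl ?_
    intro y hy
    have hy' : ¬ (0 ≤ (y:ℝ)) := by
      intro h0
      exact hy (by rw [hS'def]; exact h0)
    push_neg at hy'
    nlinarith [sq_nonneg ((y:ℝ))]
  have hin0 : ∀ t : Fin n → Bool, (δ^2/4) * (M (xdat false t) S').toReal ≤
      ∫ y, ((y:ℝ) - -(δ/2))^2 ∂ M (xdat false t) := by
    intro t
    haveI := hMk.isProbabilityMeasure (xdat false t)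
    refine inner_integral_ge inferInstance (-(δ/2)) (δ^2/4) (by positivity) S' hS' ?_
    intro y hy
    have hy' : (0:ℝ) ≤ (y:ℝ) := by rw [hS'def] at hy; exact hy
    nlinarith [sq_nonneg ((y:ℝ))]
  -- product computation
  have hprod : ∑ t : Fin n → Bool, pwt δ t * Real.exp (-(Ev εv t))
      = ∏ i, ((1-δ) + δ * Real.exp (-(εv i))) := by
    have hterm : ∀ t : Fin n → Bool, pwt δ t * Real.exp (-(Ev εv t))
        = ∏ i, (if t i then δ * Real.exp (-(εv i)) else (1-δ)) := by
      intro t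
      have hpt : pwt δ t = ∏ i, (if t i then δ else (1-δ)) := by
        unfold pwt
        rw [ENNReal.toReal_prod]
        refine Finset.prod_congr rfl fun i _ => ?_
        cases h : t i
        · rw [show wgt δ false = ENNReal.ofReal (1-δ) from rfl,
            ENNReal.toReal_ofReal (by linarith), if_neg (by simp)]
        · rw [show wgt δ true = ENNReal.ofReal δ from rfl,
            ENNReal.toReal_ofReal hδ0.le, if_pos rfl]
      have hexp : Real.exp (-(Ev εv t)) = ∏ i, (if t i then Real.exp (-(εv i)) else 1) := by
        have hneg : -(Ev εv t) = ∑ i ∈ Finset.univ.filter (fun i => t i = true), -(εv i) := by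
          unfold Ev; rw [Finset.sum_neg_distrib]
        rw [hneg, Real.exp_sum, Finset.prod_filter]
      rw [hpt, hexp, ← Finset.prod_mul_distrib]
      refine Finset.prod_congr rfl fun i _ => ?_
      cases h : t i <;> simp [h]
    rw [Finset.sum_congr rfl fun t _ => hterm t]
    have h := Finset.prod_univ_sum (fun _ : Fin n => (Finset.univ : Finset Bool))
      (fun i b => if b then δ * Real.exp (-(εv i)) else (1-δ))
    rw [Fintype.piFinset_univ] at h
    rw [← h]
    refine Finset.prod_congr rfl fun i _ => ?_
    rw [Fintype.sum_bool, if_pos rfl, if_neg (by simp)]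
    ring
  -- convexity lower bound
  have hconv : Real.exp (-(δ * ∑ i, εv i)) ≤ ∏ i, ((1-δ) + δ * Real.exp (-(εv i))) := by
    have h1 : Real.exp (-(δ * ∑ i, εv i)) = ∏ i, Real.exp (-(δ * εv i)) := by
      rw [← Real.exp_sum]
      congr 1
      rw [Finset.sum_neg_distrib, Finset.mul_sum]
    rw [h1]
    refine Finset.prod_le_prod (fun i _ => (Real.exp_pos _).le) (fun i _ => ?_)
    have h := convexOn_exp.2 (Set.mem_univ (0:ℝ)) (Set.mem_univ (-(εv i)))
      (by linarith : (0:ℝ) ≤ 1 - δ) hδ0.le (by ring)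
    simp only [smul_eq_mul, mul_zero, zero_add, Real.exp_zero, mul_one, mul_neg] at h
    linarith
  have hhalf : (1:ℝ)/2 ≤ Real.exp (-(δ * ∑ i, εv i)) := by
    have h1 : Real.exp (-(1/2)) ≤ Real.exp (-(δ * ∑ i, εv i)) := Real.exp_le_exp.2 (by linarith)
    have h2 := Real.add_one_le_exp (-(1/2 : ℝ))
    linarith
  -- combine
  have hsum_ge : (δ^2/4) * (1/2) ≤ errOf M (Prior δ false) + errOf M (Prior δ true) := by
    rw [herr0, herr1, ← Finset.sum_add_distrib]
    calc (δ^2/4) * (1/2)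
        ≤ (δ^2/4) * ∑ t : Fin n → Bool, pwt δ t * Real.exp (-(Ev εv t)) := by
          refine mul_le_mul_of_nonneg_left ?_ (by positivity)
          rw [hprod]; exact le_trans hhalf hconv
      _ = ∑ t : Fin n → Bool, (δ^2/4) * (pwt δ t * Real.exp (-(Ev εv t))) :=
          Finset.mul_sum _ _ _
      _ ≤ ∑ t : Fin n → Bool,
            (pwt δ t * ∫ y, ((y:ℝ) - -(δ/2))^2 ∂ M (xdat false t)
              + pwt δ t * ∫ y, ((y:ℝ) - δ/2)^2 ∂ M (xdat true t)) := by
          refine Finset.sum_le_sum fun t _ => ?_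
          have hq := hkey t
          have h0 := hin0 t
          have h1 := hin1 t
          have hpt := hp0 t
          calc (δ^2/4) * (pwt δ t * Real.exp (-(Ev εv t)))
              = pwt δ t * ((δ^2/4) * Real.exp (-(Ev εv t))) := by ring
            _ ≤ pwt δ t * ((δ^2/4) * ((M (xdat false t) S').toReal
                  + (M (xdat true t) S'ᶜ).toReal)) :=
                mul_le_mul_of_nonneg_left (mul_le_mul_of_nonneg_left hq (by positivity)) hpt
            _ = pwt δ t * ((δ^2/4) * (M (xdat false t) S').toReal)
                  + pwt δ t * ((δ^2/4) * (M (xdat true t) S'ᶜ).toReal) := by ring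
            _ ≤ pwt δ t * ∫ y, ((y:ℝ) - -(δ/2))^2 ∂ M (xdat false t)
                  + pwt δ t * ∫ y, ((y:ℝ) - δ/2)^2 ∂ M (xdat true t) :=
                add_le_add (mul_le_mul_of_nonneg_left h0 hpt)
                  (mul_le_mul_of_nonneg_left h1 hpt)
  have hbdd : BddAbove (Set.range fun P : {P : Measure UnitI // IsProbabilityMeasure P} =>
      errOf M P.1) := by
    refine ⟨1, ?_⟩
    rintro r ⟨P, rfl⟩
    exact errOf_le_one hMk P.2
  have hle0 : errOf M (Prior δ false) ≤ wcError M :=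
    le_ciSup hbdd ⟨Prior δ false, prior_prob δ hδ0.le hδ1 false⟩
  have hle1 : errOf M (Prior δ true) ≤ wcError M :=
    le_ciSup hbdd ⟨Prior δ true, prior_prob δ hδ0.le hδ1 true⟩
  linarith

end MLBaux

theorem minimax_lower_bound_third
    (n k : ℕ) (hn : 1 ≤ n) (hkn : k ≤ n)
    (ε₁ ε₂ f εbar : ℝ) (hε₁ : 0 < ε₁) (hε₁₂ : ε₁ ≤ ε₂)
    (hf : f = (k : ℝ) / n)
    (hεbar : εbar = f * ε₁ + (1 - f) * ε₂) :
    (1 / 16) * min (1 / (16 * n ^ 2 * εbar ^ 2)) (1 / 4)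
      ≤ minimaxRisk n (twoGroup n k ε₁ ε₂) := by
  classical
  have hN : (0:ℝ) < n := by
    have : (0:ℕ) < n := hn
    exact_mod_cast this
  have hNne : (n:ℝ) ≠ 0 := hN.ne'
  have hf0 : 0 ≤ f := by rw [hf]; positivity
  have hf1 : f ≤ 1 := by rw [hf, div_le_one hN]; exact_mod_cast hkn
  have hεb : ε₁ ≤ εbar := by
    rw [hεbar]
    nlinarith [mul_nonneg (by linarith : (0:ℝ) ≤ 1 - f) (by linarith : (0:ℝ) ≤ ε₂ - ε₁)]
  have hεbpos : (0:ℝ) < εbar := lt_of_lt_of_le hε₁ hεb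
  have hεvpos : ∀ i : Fin n, 0 < twoGroup n k ε₁ ε₂ i := by
    intro i
    unfold twoGroup
    by_cases h : (i:ℕ) < k
    · rw [if_pos h]; exact hε₁
    · rw [if_neg h]; exact lt_of_lt_of_le hε₁ hε₁₂
  set s : ℝ := (n:ℝ) * εbar with hsdef
  have hspos : 0 < s := by positivity
  have hsum : ∑ i, twoGroup n k ε₁ ε₂ i = s := by
    have h1 : ∑ i : Fin n, twoGroup n k ε₁ ε₂ i
        = ∑ i ∈ Finset.range n, (if i < k then ε₁ else ε₂) :=
      Fin.sum_univ_eq_sum_range (fun i => if i < k then ε₁ else ε₂) n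
    rw [h1, Finset.range_eq_Ico, ← Finset.sum_Ico_consecutive _ (Nat.zero_le k) hkn]
    have ha : ∑ i ∈ Finset.Ico 0 k, (if i < k then ε₁ else ε₂) = (k:ℝ) * ε₁ := by
      rw [Finset.sum_congr rfl fun i hi => if_pos (Finset.mem_Ico.1 hi).2, Finset.sum_const,
        Nat.card_Ico, Nat.sub_zero, nsmul_eq_mul]
    have hb : ∑ i ∈ Finset.Ico k n, (if i < k then ε₁ else ε₂) = ((n-k : ℕ) : ℝ) * ε₂ := by
      rw [Finset.sum_congr rfl fun i hi => if_neg (not_lt.2 (Finset.mem_Ico.1 hi).1),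
        Finset.sum_const, Nat.card_Ico, nsmul_eq_mul]
    rw [ha, hb, Nat.cast_sub hkn, hsdef, hεbar, hf]
    field_simp
  set δ : ℝ := min (1/(2*s)) 1 with hδdef
  have hδpos : 0 < δ := lt_min (by positivity) one_pos
  have hδ1 : δ ≤ 1 := min_le_right _ _
  have hδs : δ * s ≤ 1/2 := by
    have h := min_le_left (1/(2*s)) 1
    calc δ * s ≤ (1/(2*s)) * s := mul_le_mul_of_nonneg_right h hspos.le
      _ = 1/2 := by
          field_simp
  have hmin : min (1/(16*(n:ℝ)^2*εbar^2)) (1/4) ≤ δ^2 := by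
    have hs2 : 16*(n:ℝ)^2*εbar^2 = 16*s^2 := by rw [hsdef]; ring
    rcases le_total (1/(2*s)) 1 with h | h
    · have hδeq : δ = 1/(2*s) := min_eq_left h
      refine le_trans (min_le_left _ _) ?_
      rw [hs2, hδeq]
      have h4 : (0:ℝ) < 4*s^2 := by positivity
      calc 1/(16*s^2) ≤ 1/(4*s^2) := by
            apply one_div_le_one_div_of_le h4
            nlinarith [sq_nonneg s]
        _ = (1/(2*s))^2 := by
            rw [div_pow, one_pow]
            congr 1
            ring
    · have hδeq : δ = 1 := min_eq_right h
      rw [hδeq]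
      exact le_trans (min_le_right _ _) (by norm_num)
  have hcore : ∀ Mp : {M : Kernel (Dataset n) UnitI //
      IsMarkovKernel M ∧ IsDP (twoGroup n k ε₁ ε₂) M},
      (1 / 16) * min (1 / (16 * (n:ℝ) ^ 2 * εbar ^ 2)) (1 / 4) ≤ wcError Mp.1 := by
    rintro ⟨M, hMk, hDP⟩
    have h := MLBaux.core_bound (twoGroup n k ε₁ ε₂) hεvpos δ hδpos hδ1
      (by rw [hsum]; exact hδs) M hMk hDP
    refine le_trans ?_ h
    linarith
  haveI : Nonempty {M : Kernel (Dataset n) UnitI //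
      IsMarkovKernel M ∧ IsDP (twoGroup n k ε₁ ε₂) M} :=
    MLBaux.nonempty_DP _ (fun i => (hεvpos i).le)
  exact le_ciInf hcore
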